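/- Every H-polyhedron in ℚⁿ has only finitely many extreme points; that is, if P = ⋂_{i=1}^{m} {x ∈ ℚⁿ : ⟨aᵢ, x⟩ ≤ bᵢ} for finitely many aᵢ ∈ ℚⁿ and bᵢ ∈ ℚ, then the set of extreme points of P is finite. -/

import Mathlib

/-- An H-polyhedron in `ℚⁿ`: a finite intersection of closed half-spaces
`{x : ⟨aᵢ, x⟩ ≤ bᵢ}` (the intersection may be over an empty index set). -/
def IsHPolyhedron {n : ℕ} (P : Set (Fin n → ℚ)) : Prop :=
  ∃ (m : ℕ) (a : Fin m → Fin n → ℚ) (b : Fin m → ℚ),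
    P = ⋂ i : Fin m, {x : Fin n → ℚ | ∑ j, a i j * x j ≤ b i}

private lemma lin_add_smul {n : ℕ} (a : Fin n → ℚ) (x d : Fin n → ℚ) (t : ℚ) :
    ∑ j, a j * (x + t • d) j = ∑ j, a j * x j + t * ∑ j, a j * d j := by
  rw [Finset.mul_sum, ← Finset.sum_add_distrib]
  exact Finset.sum_congr rfl fun j _ => by simp [Pi.add_apply]; ring

private lemma extreme_unique {n m : ℕ} (a : Fin m → Fin n → ℚ) (b : Fin m → ℚ)
    (x : Fin n → ℚ)
    (hx : x ∈ (⋂ i, {x : Fin n → ℚ | ∑ j, a i j * x j ≤ b i}).extremePoints ℚ)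
    (y : Fin n → ℚ)
    (hy : ∀ i, ∑ j, a i j * x j = b i → ∑ j, a i j * y j = b i) : y = x := by
  by_contra hne
  set L : Fin m → (Fin n → ℚ) → ℚ := fun i z => ∑ j, a i j * z j with hL
  set d : Fin n → ℚ := y - x with hd
  have hd0 : d ≠ 0 := sub_ne_zero.mpr hne
  have hxP : ∀ i, L i x ≤ b i := by
    have := hx.1
    simp only [Set.mem_iInter, Set.mem_setOf_eq] at this
    exact this
  -- tight constraints have L i d = 0
  have htight : ∀ i, L i x = b i → L i d = 0 := by
    intro i hi
    have hyi : L i y = b i := hy i hi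
    have : L i y = L i x + 1 * L i d := by
      have := lin_add_smul (a i) x d 1
      simpa [hL, hd] using this
    rw [hyi, hi] at this
    linarith
  set c : Fin m → ℚ := fun i =>
    if L i x = b i then 1 else (b i - L i x) / (|L i d| + 1) with hc
  have hcpos : ∀ i, 0 < c i := by
    intro i
    by_cases h : L i x = b i
    · simp [hc, h]
    · have h1 : L i x < b i := lt_of_le_of_ne (hxP i) h
      have h2 : (0:ℚ) < |L i d| + 1 := by positivity
      simp only [hc, if_neg h]
      exact div_pos (by linarith) h2
  set S : Finset ℚ := insert 1 (Finset.image c Finset.univ) with hS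
  have hSne : S.Nonempty := ⟨1, by simp [hS]⟩
  set ε : ℚ := S.min' hSne with hε
  have hε0 : 0 < ε := by
    have hmem := S.min'_mem hSne
    rw [← hε] at hmem
    simp only [hS, Finset.mem_insert, Finset.mem_image] at hmem
    rcases hmem with h | ⟨i, _, h⟩
    · rw [h]; norm_num
    · rw [← h]; exact hcpos i
  have hεc : ∀ i, ε ≤ c i := fun i =>
    Finset.min'_le S _ (by simp [hS, Finset.mem_image])
  -- key bound: for each i and sign s ∈ {ε, -ε}, L i x + s * L i d ≤ b i
  have hkey : ∀ (s : ℚ), |s| = ε → ∀ i, L i x + s * L i d ≤ b i := by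
    intro s hs i
    by_cases h : L i x = b i
    · rw [htight i h, mul_zero, add_zero, h]
    · have h1 : L i x < b i := lt_of_le_of_ne (hxP i) h
      have h2 : (0:ℚ) < |L i d| + 1 := by positivity
      have h3 : ε ≤ (b i - L i x) / (|L i d| + 1) := by
        have := hεc i; simpa [hc, if_neg h] using this
      have h4 : ε * (|L i d| + 1) ≤ b i - L i x := by
        rw [← le_div_iff₀ h2]; exact h3
      have h5 : s * L i d ≤ |s| * |L i d| := by
        calc s * L i d ≤ |s * L i d| := le_abs_self _
          _ = |s| * |L i d| := abs_mul _ _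
      have h6 : |s| * |L i d| ≤ ε * (|L i d| + 1) := by
        rw [hs]
        have : (0:ℚ) ≤ |L i d| := abs_nonneg _
        nlinarith
      linarith
  have hmem1 : x + ε • d ∈ ⋂ i, {x : Fin n → ℚ | ∑ j, a i j * x j ≤ b i} := by
    simp only [Set.mem_iInter, Set.mem_setOf_eq]
    intro i
    rw [lin_add_smul (a i) x d ε]
    exact hkey ε (abs_of_pos hε0) i
  have hmem2 : x + (-ε) • d ∈ ⋂ i, {x : Fin n → ℚ | ∑ j, a i j * x j ≤ b i} := by
    simp only [Set.mem_iInter, Set.mem_setOf_eq]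
    intro i
    rw [lin_add_smul (a i) x d (-ε)]
    exact hkey (-ε) (by rw [abs_neg]; exact abs_of_pos hε0) i
  have hseg : x ∈ openSegment ℚ (x + (-ε) • d) (x + ε • d) := by
    refine ⟨1/2, 1/2, by norm_num, by norm_num, by norm_num, ?_⟩
    module
  have h1 := hx.2 hmem2 hmem1 hseg
  have : (-ε) • d = 0 := by
    have := congrArg (· - x) h1
    simpa using this
  rcases smul_eq_zero.mp this with h | h
  · exact absurd h (by simpa using ne_of_gt hε0)
  · exact hd0 h

/-- An H-polyhedron has only finitely many extreme points. -/
theorem finite_extremePoints_of_isHPolyhedron {n : ℕ} (P : Set (Fin n → ℚ))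
    (hP : IsHPolyhedron P) : (P.extremePoints ℚ).Finite := by
  obtain ⟨m, a, b, rfl⟩ := hP
  have hinj : Set.InjOn (fun x => ({i | ∑ j, a i j * x j = b i} : Set (Fin m)))
      ((⋂ i, {x : Fin n → ℚ | ∑ j, a i j * x j ≤ b i}).extremePoints ℚ) := by
    intro x hx y hy hxy
    refine (extreme_unique a b x hx y ?_).symm
    intro i hi
    simp only [Set.ext_iff, Set.mem_setOf_eq] at hxy
    exact (hxy i).mp hi
  exact Set.Finite.of_finite_image (Set.toFinite _) hinj
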